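/- Let (A, q_A) and (B, q_B) be non-degenerate finite quadratic forms, φ : D_A → D_B an anti-isometry between subgroups (q_B(φ(x)) = -q_A(x)), Γ ⊆ A ⊕ B its graph, and C := Γ^⊥/Γ with the induced quadratic form. Let K be the kernel of the natural homomorphism {(g,h) ∈ O(A) × O(B) : Γ^{(g,h)} = Γ} → O(C). Then the projection i_A : K → O(A), (g,h) ↦ g, is injective. -/

import Mathlib

/-- ℚ/2ℤ, the value group of a finite quadratic form. -/
abbrev Q2 : Type := ℚ ⧸ AddSubgroup.zmultiples (2 : ℚ)

/-- The polar (bilinear) form associated to a quadratic form `q`; with values in ℚ/2ℤ it is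
twice the usual ℚ/ℤ-valued bilinear form `b`, and vanishes exactly when `b` does. -/
def qpolar {A : Type} [AddCommGroup A] (q : A → Q2) (x y : A) : Q2 :=
  q (x + y) - q x - q y

/-- `q` is a non-degenerate finite quadratic form on the finite abelian group `A`. -/
structure IsNondegFQF {A : Type} [AddCommGroup A] [Fintype A] (q : A → Q2) : Prop where
  hom : ∀ (n : ℤ) (a : A), q (n • a) = (n ^ 2) • q a
  bilin : ∀ a b c : A, qpolar q (a + b) c = qpolar q a c + qpolar q b c
  nondeg : ∀ a : A, (∀ b : A, qpolar q a b = 0) → a = 0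


/-- `(a, b)` lies in the graph `Γ ⊆ A ⊕ B` of `φ : D_A ≃ D_B`. -/
def InGraph {A B : Type} [AddCommGroup A] [AddCommGroup B]
    (DA : AddSubgroup A) (DB : AddSubgroup B) (φ : DA ≃+ DB) (a : A) (b : B) : Prop :=
  ∃ x : DA, (x : A) = a ∧ (φ x : B) = b

/-- `(a, b)` lies in `Γ^⊥`, the orthogonal complement of the graph of `φ`
with respect to the bilinear form associated to `q_A ⊕ q_B`. -/
def InPerp {A B : Type} [AddCommGroup A] [AddCommGroup B]
    (qA : A → Q2) (qB : B → Q2) (DA : AddSubgroup A) (DB : AddSubgroup B)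
    (φ : DA ≃+ DB) (a : A) (b : B) : Prop :=
  ∀ x : DA, qpolar qA a (x : A) + qpolar qB b (φ x : B) = 0

noncomputable instance : DivisibleBy Q2 ℤ :=
  haveI : Fact (0 < (2:ℚ)) := ⟨by norm_num⟩
  inferInstanceAs (DivisibleBy (AddCircle (2:ℚ)) ℤ)

lemma q2_torsion {n : ℕ} (hn : 0 < n) (x : Q2) (hx : n • x = 0) :
    ∃ k : ℤ, k • ((((2:ℚ) / (n:ℚ)) : ℚ) : Q2) = x := by
  obtain ⟨r, rfl⟩ := QuotientAddGroup.mk_surjective x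
  rw [← QuotientAddGroup.mk_nsmul] at hx
  have hmem : (n • r : ℚ) ∈ AddSubgroup.zmultiples (2:ℚ) :=
    (QuotientAddGroup.eq_zero_iff _).mp hx
  obtain ⟨k, hk⟩ := AddSubgroup.mem_zmultiples_iff.mp hmem
  have hn' : (n : ℚ) ≠ 0 := Nat.cast_ne_zero.mpr hn.ne'
  have hk' : (k : ℚ) * 2 = (n : ℚ) * r := by
    simpa [zsmul_eq_mul, nsmul_eq_mul] using hk
  refine ⟨k, ?_⟩
  rw [← QuotientAddGroup.mk_zsmul]
  congr 1
  field_simp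
  rw [zsmul_eq_mul, mul_div_assoc', div_eq_iff hn']; linear_combination hk'

lemma q2_hasEnoughRootsOfUnity (n : ℕ) [NeZero n] :
    HasEnoughRootsOfUnity (Multiplicative Q2) n := by
  have hn : 0 < n := Nat.pos_of_ne_zero (NeZero.ne n)
  haveI : Fact (0 < (2:ℚ)) := ⟨by norm_num⟩
  set ζa : Q2 := (((2:ℚ) / (n:ℚ)) : Q2) with hζa
  have hord : addOrderOf ζa = n := AddCircle.addOrderOf_period_div hn
  set ζ : Multiplicative Q2 := Multiplicative.ofAdd ζa with hζ
  have hordζ : orderOf ζ = n := by rw [hζ, orderOf_ofAdd_eq_addOrderOf, hord]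
  have hprim : IsPrimitiveRoot ζ n := hordζ ▸ IsPrimitiveRoot.orderOf ζ
  have hmem : toUnits ζ ∈ rootsOfUnity n (Multiplicative Q2) := by
    rw [mem_rootsOfUnity, ← map_pow, hprim.pow_eq_one, map_one]
  refine ⟨⟨ζ, hprim⟩, ⟨⟨⟨toUnits ζ, hmem⟩, fun u => ?_⟩⟩⟩
  have hu : ((u : (Multiplicative Q2)ˣ) : Multiplicative Q2) ^ n = 1 := by
    have := (mem_rootsOfUnity' n _).mp u.2
    exact this
  have hadd : n • (Multiplicative.toAdd ((u : (Multiplicative Q2)ˣ) : Multiplicative Q2)) = 0 := by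
    rw [← toAdd_pow, hu, toAdd_one]
  obtain ⟨k, hk⟩ := q2_torsion hn _ hadd
  refine Subgroup.mem_zpowers_iff.mpr ⟨k, ?_⟩
  apply Subtype.ext
  rw [SubgroupClass.coe_zpow]
  show (toUnits ζ) ^ k = (u : (Multiplicative Q2)ˣ)
  rw [← map_zpow]
  have : ζ ^ k = ((u : (Multiplicative Q2)ˣ) : Multiplicative Q2) := by
    rw [hζ, ← ofAdd_zsmul, hk, ofAdd_toAdd]
  rw [this, toUnits_val_apply]

lemma q2_hom_equiv (A : Type) [AddCommGroup A] [Fintype A] : Nonempty ((A →+ Q2) ≃ A) := by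
  haveI : NeZero (Monoid.exponent (Multiplicative A)) :=
    ⟨Monoid.exponent_ne_zero_of_finite⟩
  haveI := q2_hasEnoughRootsOfUnity (Monoid.exponent (Multiplicative A))
  obtain ⟨e⟩ := CommGroup.monoidHom_mulEquiv_of_hasEnoughRootsOfUnity
    (Multiplicative A) (Multiplicative Q2)
  exact ⟨AddMonoidHom.toMultiplicative.trans
    ((MulEquiv.monoidHomCongrRight
        (toUnits (G := Multiplicative Q2))).toEquiv.trans
      (e.toEquiv.trans Multiplicative.toAdd))⟩

lemma qpolar_comm {A : Type} [AddCommGroup A] (q : A → Q2) (x y : A) :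
    qpolar q x y = qpolar q y x := by
  unfold qpolar; rw [add_comm x y]; abel

lemma qpolar_add_right {A : Type} [AddCommGroup A] [Fintype A] {q : A → Q2}
    (h : IsNondegFQF q) (a b c : A) :
    qpolar q a (b + c) = qpolar q a b + qpolar q a c := by
  rw [qpolar_comm q a (b + c), h.bilin, qpolar_comm q b a, qpolar_comm q c a]

lemma exists_rep {A : Type} [AddCommGroup A] [Fintype A] {qA : A → Q2}
    (hA : IsNondegFQF qA) (f : A →+ Q2) : ∃ a : A, ∀ x : A, qpolar qA a x = f x := by
  let Φ : A →+ (A →+ Q2) := AddMonoidHom.mk'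
    (fun a => AddMonoidHom.mk' (fun x => qpolar qA a x) (fun x y => qpolar_add_right hA a x y))
    (fun a b => by ext x; simpa using hA.bilin a b x)
  have hinj : Function.Injective Φ := by
    rw [injective_iff_map_eq_zero]
    intro a ha
    exact hA.nondeg a fun b => by exact DFunLike.congr_fun ha b
  obtain ⟨eqv⟩ := q2_hom_equiv A
  have hsurj : Function.Surjective Φ :=
    (Finite.injective_iff_surjective_of_equiv eqv.symm).mp hinj
  obtain ⟨a, ha⟩ := hsurj f
  exact ⟨a, fun x => by rw [← ha]; rfl⟩

lemma exists_extension {A : Type} [AddCommGroup A] (DA : AddSubgroup A) (f : DA →+ Q2) :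
    ∃ F : A →+ Q2, ∀ x : DA, F (x : A) = f x := by
  have inj : Module.Injective ℤ Q2 := (Module.Baer.of_divisible Q2).injective
  obtain ⟨F, hF⟩ := inj.out DA.subtype.toIntLinearMap
    (fun x y h => Subtype.ext h) f.toIntLinearMap
  exact ⟨F.toAddMonoidHom, fun x => hF x⟩

/-- the projection `i_A : K → O(A)`, `(g, h) ↦ g`, is injective, where `K` is the
kernel of the map from the stabilizer of `Γ` in `O(A) × O(B)` to `O(Γ^⊥/Γ)`:
two elements `(g, h₁)` and `(g, h₂)` of `K` with the same first component are equal. -/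
theorem statement1 {A B : Type} [AddCommGroup A] [Fintype A] [AddCommGroup B] [Fintype B]
    (qA : A → Q2) (qB : B → Q2) (hA : IsNondegFQF qA) (hB : IsNondegFQF qB)
    (DA : AddSubgroup A) (DB : AddSubgroup B) (φ : DA ≃+ DB)
    (hφ : ∀ x : DA, qB ((φ x : B)) = - qA ((x : A)))
    (g : A ≃+ A) (h₁ h₂ : B ≃+ B)
    (hg : ∀ a : A, qA (g a) = qA a)
    (hh₁ : ∀ b : B, qB (h₁ b) = qB b) (hh₂ : ∀ b : B, qB (h₂ b) = qB b)
    -- `(g, h₁)` and `(g, h₂)` preserve `Γ`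
    (hΓ₁ : ∀ (a : A) (b : B), InGraph DA DB φ a b ↔ InGraph DA DB φ (g a) (h₁ b))
    (hΓ₂ : ∀ (a : A) (b : B), InGraph DA DB φ a b ↔ InGraph DA DB φ (g a) (h₂ b))
    -- `(g, h₁)` and `(g, h₂)` act trivially on `C = Γ^⊥/Γ`
    (hC₁ : ∀ (a : A) (b : B), InPerp qA qB DA DB φ a b →
      InGraph DA DB φ (g a - a) (h₁ b - b))
    (hC₂ : ∀ (a : A) (b : B), InPerp qA qB DA DB φ a b →
      InGraph DA DB φ (g a - a) (h₂ b - b)) :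
    h₁ = h₂ := by
  refine AddEquiv.ext fun b => ?_
  -- construct `a` with `(a, b) ∈ Γ^⊥`
  let f : DA →+ Q2 := AddMonoidHom.mk' (fun x => - qpolar qB b ((φ x : B)))
    (fun x y => by
      have hc : ((φ (x + y) : DB) : B) = (φ x : B) + (φ y : B) := by rw [map_add]; rfl
      rw [hc, qpolar_add_right hB, neg_add])
  obtain ⟨F, hF⟩ := exists_extension DA f
  obtain ⟨a, ha⟩ := exists_rep hA F
  have hperp : InPerp qA qB DA DB φ a b := fun x => by
    rw [ha, hF]
    show - qpolar qB b ((φ x : B)) + qpolar qB b ((φ x : B)) = 0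
    exact neg_add_cancel _
  obtain ⟨x₁, hx₁, hfx₁⟩ := hC₁ a b hperp
  obtain ⟨x₂, hx₂, hfx₂⟩ := hC₂ a b hperp
  have hx : x₁ = x₂ := Subtype.ext (hx₁.trans hx₂.symm)
  have : h₁ b - b = h₂ b - b := by rw [← hfx₁, ← hfx₂, hx]
  exact sub_left_injective this
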